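/- Let Σ be a finite alphabet, a ∈ Σ, and L ⊆ {a}* a regular language. Then the language L' = L ⧢ (Σ∖{a})* (equivalently, L' = { w ∈ Σ* : a^{|w|_a} ∈ L }) is a commutative regular language with a product-form minimal automaton. In particular, if |Σ| = 1 then every regular language over Σ has a product-form minimal automaton. -/

import Mathlib

/-- The Nerode right-congruence of a language `L`: `u ≡_L v` iff
for all words `x`, `u ++ x ∈ L ↔ v ++ x ∈ L`. -/
def NerodeEq {α : Type*} (L : Set (List α)) (u v : List α) : Prop :=
  ∀ x : List α, u ++ x ∈ L ↔ v ++ x ∈ L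

/-- The Nerode right-congruence as a setoid on words. -/
def nerodeSetoid {α : Type*} (L : Set (List α)) : Setoid (List α) where
  r := NerodeEq L
  iseqv := ⟨fun _ _ => Iff.rfl, fun h x => (h x).symm, fun h1 h2 x => (h1 x).trans (h2 x)⟩

/-- A language is regular iff its Nerode right-congruence has finitely many classes. -/
def RegularLang {α : Type*} (L : Set (List α)) : Prop :=
  Finite (Quotient (nerodeSetoid L))

/-- The state complexity of `L`: the number of Nerode right-congruence classes. -/
noncomputable def sc {α : Type*} (L : Set (List α)) : ℕ :=
  Nat.card (Quotient (nerodeSetoid L))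

/-- A language is commutative if membership only depends on the number of
occurrences of each letter. -/
def CommutativeLang {α : Type*} [DecidableEq α] (L : Set (List α)) : Prop :=
  ∀ u v : List α, (∀ x : α, u.count x = v.count x) → (u ∈ L ↔ v ∈ L)

/-- A (commutative) language has a product-form minimal automaton iff for all words
`u, v`: `u ≡_L v` holds if and only if `x^{|u|_x} ≡_L x^{|v|_x}` for every letter `x`. -/
def HasProductForm {α : Type*} [DecidableEq α] (L : Set (List α)) : Prop :=
  ∀ u v : List α,
    NerodeEq L u v ↔
      ∀ x : α, NerodeEq L (List.replicate (u.count x) x) (List.replicate (v.count x) x)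

/-- `IsShuffleOf u v w` holds iff `w` is an interleaving `x₁y₁x₂y₂⋯xₙyₙ`
with `u = x₁⋯xₙ` and `v = y₁⋯yₙ`. -/
inductive IsShuffleOf {α : Type*} : List α → List α → List α → Prop
  | nil : IsShuffleOf [] [] []
  | left {u v w : List α} {a : α} : IsShuffleOf u v w → IsShuffleOf (a :: u) v (a :: w)
  | right {u v w : List α} {a : α} : IsShuffleOf u v w → IsShuffleOf u (a :: v) (a :: w)

/-- The shuffle of two languages. -/
def shuffleLang {α : Type*} (U V : Set (List α)) : Set (List α) :=
  {w | ∃ u ∈ U, ∃ v ∈ V, IsShuffleOf u v w}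

section Aux
variable {α : Type*} [DecidableEq α]

lemma allEq_replicate (l : List α) (a : α) (h : ∀ b ∈ l, b = a) :
    l = List.replicate (l.count a) a := by
  rw [List.eq_replicate_iff]
  exact ⟨(List.count_eq_length.mpr fun b hb => (h b hb).symm).symm, h⟩

lemma shuffle_count {u v w : List α} (h : IsShuffleOf u v w) (x : α) :
    w.count x = u.count x + v.count x := by
  induction h with
  | nil => simp
  | left _ ih => simp [List.count_cons, ih]; omega
  | right _ ih => simp [List.count_cons, ih]; omega

/-- The key lemma: the Nerode equivalence in `L'` reduces to that in `L`. -/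
lemma keyA (a : α) (L : Set (List α)) (hsub : ∀ w ∈ L, ∀ x ∈ w, x = a) (u v : List α) :
    NerodeEq {w : List α | List.replicate (w.count a) a ∈ L} u v ↔
      NerodeEq L (List.replicate (u.count a) a) (List.replicate (v.count a) a) := by
  constructor
  · intro h x
    by_cases hx : ∀ b ∈ x, b = a
    · have hx' : x = List.replicate (x.count a) a := allEq_replicate x a hx
      have e1 : List.replicate (u.count a) a ++ x
          = List.replicate ((u ++ x).count a) a := by
        rw [List.count_append, List.replicate_add]
        rw [← hx']
      have e2 : List.replicate (v.count a) a ++ x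
          = List.replicate ((v ++ x).count a) a := by
        rw [List.count_append, List.replicate_add]
        rw [← hx']
      rw [e1, e2]
      exact h x
    · push_neg at hx
      obtain ⟨b, hb, hba⟩ := hx
      constructor <;> intro hmem <;>
        exact absurd (hsub _ hmem b (by simp [hb])) hba
  · intro h x
    have e1 : (u ++ x).count a = u.count a + x.count a := List.count_append
    have e2 : (v ++ x).count a = v.count a + x.count a := List.count_append
    simp only [Set.mem_setOf_eq, e1, e2, List.replicate_add]
    exact h (List.replicate (x.count a) a)

lemma mainLem (a : α) (L : Set (List α))
    (hsub : ∀ w ∈ L, ∀ x ∈ w, x = a) (hreg : RegularLang L) :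
    CommutativeLang {w : List α | List.replicate (w.count a) a ∈ L} ∧
    RegularLang {w : List α | List.replicate (w.count a) a ∈ L} ∧
    HasProductForm {w : List α | List.replicate (w.count a) a ∈ L} := by
  set L' : Set (List α) := {w : List α | List.replicate (w.count a) a ∈ L} with hL'
  refine ⟨?_, ?_, ?_⟩
  · intro u v hc
    simp only [hL', Set.mem_setOf_eq, hc a]
  · haveI : Finite (Quotient (nerodeSetoid L)) := hreg
    refine Finite.of_injective
      (Quotient.lift (fun w : List α =>
        (Quotient.mk (nerodeSetoid L) (List.replicate (w.count a) a)))
        (fun u v huv => Quotient.sound ((keyA a L hsub u v).mp huv))) ?_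
    intro q1 q2 hq
    obtain ⟨u, rfl⟩ := Quotient.exists_rep q1
    obtain ⟨v, rfl⟩ := Quotient.exists_rep q2
    simp only [Quotient.lift_mk] at hq
    exact Quotient.sound ((keyA a L hsub u v).mpr (Quotient.exact hq))
  · intro u v
    constructor
    · intro h x
      by_cases hx : x = a
      · rw [hx, keyA a L hsub, List.count_replicate_self, List.count_replicate_self]
        exact (keyA a L hsub u v).mp h
      · rw [keyA a L hsub]
        have h0u : (List.replicate (u.count x) x).count a = 0 := by
          simp [List.count_replicate, hx, Ne.symm hx]
        have h0v : (List.replicate (v.count x) x).count a = 0 := by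
          simp [List.count_replicate, hx, Ne.symm hx]
        rw [h0u, h0v]
        exact fun _ => Iff.rfl
    · intro h
      rw [keyA a L hsub]
      have := (keyA a L hsub _ _).mp (h a)
      rwa [List.count_replicate_self, List.count_replicate_self] at this

lemma shuffleEq (a : α) (L : Set (List α)) (hsub : ∀ w ∈ L, ∀ x ∈ w, x = a) :
    {w : List α | List.replicate (w.count a) a ∈ L}
      = shuffleLang L {w : List α | ∀ x ∈ w, x ≠ a} := by
  ext w
  constructor
  · intro hw
    refine ⟨List.replicate (w.count a) a, hw, w.filter (fun x => x ≠ a),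
      fun x hx => by simpa using List.of_mem_filter hx, ?_⟩
    clear hw
    induction w with
    | nil => simpa using IsShuffleOf.nil
    | cons b t ih =>
      by_cases hb : b = a
      · subst hb
        have hf : List.filter (fun x => decide (x ≠ b)) (b :: t)
            = List.filter (fun x => decide (x ≠ b)) t := by simp
        rw [List.count_cons_self, List.replicate_succ, hf]
        exact IsShuffleOf.left ih
      · have hf : List.filter (fun x => decide (x ≠ a)) (b :: t)
            = b :: List.filter (fun x => decide (x ≠ a)) t := by simp [hb]
        rw [List.count_cons_of_ne hb, hf]
        exact IsShuffleOf.right ih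
  · rintro ⟨u, hu, v, hv, hsh⟩
    have hva : v.count a = 0 := List.count_eq_zero.mpr (fun hm => hv a hm rfl)
    have hcount : w.count a = u.count a := by
      rw [shuffle_count hsh a, hva]; omega
    show List.replicate (w.count a) a ∈ L
    rw [hcount, ← allEq_replicate u a (hsub u hu)]
    exact hu

end Aux

/-- If `L ⊆ {a}*` is regular, then `L' = L ⧢ (Σ∖{a})* = {w : a^{|w|_a} ∈ L}` is a
commutative regular language with a product-form minimal automaton. In particular,
over a unary alphabet every regular language is commutative with a product-form
minimal automaton. -/
theorem stmt7 {α : Type*} [Fintype α] [DecidableEq α] (a : α) (L : Set (List α))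
    (hsub : ∀ w ∈ L, ∀ x ∈ w, x = a) (hreg : RegularLang L) :
    ({w : List α | List.replicate (w.count a) a ∈ L}
        = shuffleLang L {w : List α | ∀ x ∈ w, x ≠ a} ∧
      CommutativeLang {w : List α | List.replicate (w.count a) a ∈ L} ∧
      RegularLang {w : List α | List.replicate (w.count a) a ∈ L} ∧
      HasProductForm {w : List α | List.replicate (w.count a) a ∈ L}) ∧
    (Fintype.card α = 1 →
      ∀ M : Set (List α), RegularLang M → CommutativeLang M ∧ HasProductForm M) := by
  refine ⟨⟨shuffleEq a L hsub, mainLem a L hsub hreg⟩, ?_⟩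
  intro hcard M hM
  have hall : ∀ x : α, x = a := fun x => Fintype.card_le_one_iff.mp hcard.le x a
  have hrep : ∀ w : List α, w = List.replicate (w.count a) a :=
    fun w => allEq_replicate w a (fun b _ => hall b)
  have hMeq : {w : List α | List.replicate (w.count a) a ∈ M} = M := by
    ext w
    simp only [Set.mem_setOf_eq]
    rw [← hrep w]
  have hm := mainLem a M (fun w _ x _ => hall x) hM
  rw [hMeq] at hm
  exact ⟨hm.1, hm.2.2⟩
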